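/- If h : ℝ → ℝ is bounded and measurable, then the solution y of the Stein equation satisfies ‖y‖_∞ ≤ √(2π/(1−ψ))·‖h‖_∞. -/

import Mathlib

open MeasureTheory ProbabilityTheory Real Set

noncomputable section

/-- `h̄_ψ = E h(N)` for `N ~ N(0, (1-ψ)⁻¹)`. -/
def gaussMean (ψ : ℝ) (h : ℝ → ℝ) : ℝ :=
  ∫ x, h x ∂(gaussianReal 0 (Real.toNNReal (1 - ψ)⁻¹))

/-- The bounded solution `y` of the Stein equation
`y'(x) - (1-ψ) x y(x) = h(x) - h̄_ψ`, given explicitly by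
`y(x) = -e^{(1-ψ)x²/2} ∫_x^∞ e^{-(1-ψ)t²/2} (h(t) - h̄_ψ) dt`. -/
def steinSol (ψ : ℝ) (h : ℝ → ℝ) (x : ℝ) : ℝ :=
  - Real.exp ((1 - ψ) * x ^ 2 / 2) *
      ∫ t in Set.Ioi x, Real.exp (-((1 - ψ) * t ^ 2 / 2)) * (h t - gaussMean ψ h)

lemma shiftIoi (g : ℝ → ℝ) (x : ℝ) :
    ∫ t in Set.Ioi x, g (t - x) = ∫ s in Set.Ioi (0:ℝ), g s := by
  rw [← integral_indicator measurableSet_Ioi, ← integral_indicator measurableSet_Ioi,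
    ← integral_sub_right_eq_self (fun t => (Set.Ioi (0:ℝ)).indicator g t) x]
  congr 1
  ext t
  by_cases ht : x < t
  · simp [Set.indicator_apply, ht, sub_pos.mpr ht]
  · simp [Set.indicator_apply, ht, fun hh => ht (sub_pos.mp hh)]

lemma shiftIic (g : ℝ → ℝ) (x : ℝ) :
    ∫ t in Set.Iic x, g (t - x) = ∫ s in Set.Iic (0:ℝ), g s := by
  rw [← integral_indicator measurableSet_Iic, ← integral_indicator measurableSet_Iic,
    ← integral_sub_right_eq_self (fun t => (Set.Iic (0:ℝ)).indicator g t) x]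
  congr 1
  ext t
  by_cases ht : t ≤ x
  · simp [Set.indicator_apply, ht, sub_nonpos.mpr ht]
  · simp [Set.indicator_apply, ht, fun hh => ht (sub_nonpos.mp hh)]

theorem stmt9 (ψ : ℝ) (hψ0 : 0 ≤ ψ) (hψ1 : ψ < 1) (h : ℝ → ℝ) (hmeas : Measurable h) (C : ℝ) (hC : ∀ x, |h x| ≤ C) :
    ∀ x : ℝ, |steinSol ψ h x| ≤ Real.sqrt (2 * Real.pi / (1 - ψ)) * C := by
  set a : ℝ := 1 - ψ with ha_def
  have ha : 0 < a := by simp [ha_def]; linarith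
  have hb : 0 < a / 2 := by linarith
  set K : ℝ := Real.sqrt (2 * Real.pi / a) with hK_def
  have hK0 : 0 < K := Real.sqrt_pos.mpr (by positivity)
  set G : ℝ → ℝ := fun u => Real.exp (-(a * u ^ 2 / 2)) with hG_def
  set c : ℝ := gaussMean ψ h with hc_def
  have hC0 : 0 ≤ C := (abs_nonneg _).trans (hC 0)
  have hGalt : G = fun u => Real.exp (-(a / 2) * u ^ 2) := by
    funext u
    show Real.exp (-(a * u ^ 2 / 2)) = Real.exp (-(a / 2) * u ^ 2)
    congr 1
    ring
  have hGint : Integrable G := hGalt ▸ integrable_exp_neg_mul_sq hb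
  have hGval : ∫ u, G u = K := by
    have := integral_gaussian (a / 2)
    rw [hK_def]
    have h2 : Real.pi / (a / 2) = 2 * Real.pi / a := by
      rw [div_div_eq_mul_div]; ring_nf
    rw [← h2, ← this, hGalt]
  have hGhalf : ∫ u in Set.Ioi (0:ℝ), G u = K / 2 := by
    have := integral_gaussian_Ioi (a / 2)
    have h2 : Real.pi / (a / 2) = 2 * Real.pi / a := by
      rw [div_div_eq_mul_div]; ring_nf
    rw [hK_def, ← h2, ← this, hGalt]
  have hGeven : ∀ u : ℝ, G (-u) = G u := by intro u; simp [hG_def]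
  have hGhalfIic : ∫ u in Set.Iic (0:ℝ), G u = K / 2 := by
    have := integral_comp_neg_Iic (0:ℝ) G
    simp only [neg_zero] at this
    rw [← hGhalf, ← this]
    congr 1 with u
    exact (hGeven u).symm
  -- bound on the mean
  set v : NNReal := Real.toNNReal a⁻¹ with hv_def
  have hv : v ≠ 0 := by
    simp [hv_def, Real.toNNReal_eq_zero]
    positivity
  have hcC : |c| ≤ C := by
    have hb' : ∀ᵐ t ∂(gaussianReal 0 v), ‖h t‖ ≤ C :=
      ae_of_all _ fun t => by simpa only [Real.norm_eq_abs] using hC t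
    have := norm_integral_le_of_norm_le_const hb'
    simpa [hc_def, gaussMean, hv_def, Real.norm_eq_abs] using this
  -- integrands
  have hGh_int : Integrable (fun t => G t * h t) := by
    have := hGint.bdd_mul hmeas.aestronglyMeasurable
      (c := C) (ae_of_all _ fun t => by simpa only [Real.norm_eq_abs] using hC t)
    simpa [mul_comm] using this
  have hf_int : Integrable (fun t => G t * (h t - c)) := by
    have := hGint.bdd_mul ((hmeas.sub measurable_const)).aestronglyMeasurable
      (c := C + |c|) (ae_of_all _ fun t => by
        have := abs_sub (h t) c
        simp only [Real.norm_eq_abs]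
        calc |h t - c| ≤ |h t| + |c| := abs_sub _ _
          _ ≤ C + |c| := by linarith [hC t])
    simpa [mul_comm] using this
  -- compute gaussMean as a Lebesgue integral
  have hpdf : ∀ t, gaussianPDFReal 0 v t = K⁻¹ * G t := by
    intro t
    have hva : (v : ℝ) = a⁻¹ := Real.coe_toNNReal _ (by positivity)
    rw [gaussianPDFReal, hva, hG_def]
    have h1 : 2 * Real.pi * a⁻¹ = 2 * Real.pi / a := by ring
    have h2 : -(t - 0) ^ 2 / (2 * a⁻¹) = -(a * t ^ 2 / 2) := by
      rw [div_eq_mul_inv, mul_inv, inv_inv]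
      ring
    rw [h1, h2, hK_def]
  have hc_eq : c = K⁻¹ * ∫ t, G t * h t := by
    rw [hc_def, gaussMean, ← hv_def, gaussianReal_of_var_ne_zero 0 hv]
    have hmeas' : Measurable fun t => (gaussianPDFReal 0 v t).toNNReal :=
      (measurable_gaussianPDFReal 0 v).real_toNNReal
    have heq : gaussianPDF 0 v = fun t => ((gaussianPDFReal 0 v t).toNNReal : ENNReal) := rfl
    rw [heq, integral_withDensity_eq_integral_smul hmeas' h]
    simp only [NNReal.smul_def, Real.coe_toNNReal _ (gaussianPDFReal_nonneg 0 v _)]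
    rw [← integral_const_mul]
    congr 1 with t
    rw [hpdf t, smul_eq_mul]
    ring
  have htot : ∫ t, G t * (h t - c) = 0 := by
    have hsub : (fun t => G t * (h t - c)) = fun t => G t * h t - c * G t := by
      funext t; ring
    have hGh : ∫ t, G t * h t = K * c := by
      rw [hc_eq, ← mul_assoc, mul_inv_cancel₀ hK0.ne', one_mul]
    rw [hsub, integral_sub hGh_int (hGint.const_mul c), integral_const_mul, hGval, hGh]
    ring
  -- the main bound
  intro x
  have hE : |steinSol ψ h x| =
      Real.exp (a * x ^ 2 / 2) * |∫ t in Set.Ioi x, G t * (h t - c)| := by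
    rw [steinSol, ← ha_def, ← hc_def]
    rw [abs_mul, abs_neg, abs_of_pos (Real.exp_pos _)]
  have hEinv : Real.exp (a * x ^ 2 / 2) * Real.exp (-(a * x ^ 2 / 2)) = 1 := by
    rw [← Real.exp_add]; simp
  rcases le_or_gt 0 x with hx | hx
  · -- x ≥ 0 : bound via tail
    have hptw : ∀ t ∈ Set.Ioi x, |G t * (h t - c)| ≤
        2 * C * Real.exp (-(a * x ^ 2 / 2)) * G (t - x) := by
      intro t ht
      have htx : x ≤ t := le_of_lt ht
      have h1 : |G t * (h t - c)| ≤ 2 * C * G t := by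
        rw [abs_mul, abs_of_pos (Real.exp_pos _)]
        have : |h t - c| ≤ 2 * C := by
          calc |h t - c| ≤ |h t| + |c| := abs_sub _ _
            _ ≤ 2 * C := by linarith [hC t]
        calc Real.exp (-(a * t ^ 2 / 2)) * |h t - c|
            ≤ Real.exp (-(a * t ^ 2 / 2)) * (2 * C) :=
              mul_le_mul_of_nonneg_left this (Real.exp_pos _).le
          _ = 2 * C * G t := by rw [hG_def]; ring
      have h2 : G t ≤ Real.exp (-(a * x ^ 2 / 2)) * G (t - x) := by
        rw [hG_def, ← Real.exp_add, Real.exp_le_exp]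
        nlinarith [mul_nonneg (mul_nonneg ha.le hx) (sub_nonneg.2 htx)]
      calc |G t * (h t - c)| ≤ 2 * C * G t := h1
        _ ≤ 2 * C * (Real.exp (-(a * x ^ 2 / 2)) * G (t - x)) :=
            mul_le_mul_of_nonneg_left h2 (by positivity)
        _ = 2 * C * Real.exp (-(a * x ^ 2 / 2)) * G (t - x) := by ring
    have hI : |∫ t in Set.Ioi x, G t * (h t - c)| ≤
        2 * C * Real.exp (-(a * x ^ 2 / 2)) * (K / 2) := by
      calc |∫ t in Set.Ioi x, G t * (h t - c)|
          ≤ ∫ t in Set.Ioi x, |G t * (h t - c)| := by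
            simpa only [Real.norm_eq_abs] using
              norm_integral_le_integral_norm (μ := volume.restrict (Set.Ioi x))
                (fun t => G t * (h t - c))
        _ ≤ ∫ t in Set.Ioi x, 2 * C * Real.exp (-(a * x ^ 2 / 2)) * G (t - x) := by
            apply setIntegral_mono_on (hf_int.abs.integrableOn)
              (((hGint.comp_sub_right x).const_mul _).integrableOn)
              measurableSet_Ioi hptw
        _ = 2 * C * Real.exp (-(a * x ^ 2 / 2)) * ∫ t in Set.Ioi x, G (t - x) := by
            rw [integral_const_mul]
        _ = 2 * C * Real.exp (-(a * x ^ 2 / 2)) * (K / 2) := by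
            rw [shiftIoi, hGhalf]
    rw [hE]
    calc Real.exp (a * x ^ 2 / 2) * |∫ t in Set.Ioi x, G t * (h t - c)|
        ≤ Real.exp (a * x ^ 2 / 2) * (2 * C * Real.exp (-(a * x ^ 2 / 2)) * (K / 2)) :=
          mul_le_mul_of_nonneg_left hI (Real.exp_pos _).le
      _ = (Real.exp (a * x ^ 2 / 2) * Real.exp (-(a * x ^ 2 / 2))) * (K * C) := by ring
      _ = K * C := by rw [hEinv]; ring
  · -- x < 0 : use that the total integral vanishes
    have hx' : x ≤ 0 := hx.le
    have hsplit : (∫ t in Set.Iic x, G t * (h t - c)) +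
        (∫ t in Set.Ioi x, G t * (h t - c)) = 0 := by
      rw [intervalIntegral.integral_Iic_add_Ioi hf_int.integrableOn hf_int.integrableOn, htot]
    have hIeq : |∫ t in Set.Ioi x, G t * (h t - c)| =
        |∫ t in Set.Iic x, G t * (h t - c)| := by
      have : (∫ t in Set.Ioi x, G t * (h t - c)) =
          -(∫ t in Set.Iic x, G t * (h t - c)) := by linarith
      rw [this, abs_neg]
    have hptw : ∀ t ∈ Set.Iic x, |G t * (h t - c)| ≤
        2 * C * Real.exp (-(a * x ^ 2 / 2)) * G (t - x) := by
      intro t ht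
      have htx : t ≤ x := ht
      have h1 : |G t * (h t - c)| ≤ 2 * C * G t := by
        rw [abs_mul, abs_of_pos (Real.exp_pos _)]
        have : |h t - c| ≤ 2 * C := by
          calc |h t - c| ≤ |h t| + |c| := abs_sub _ _
            _ ≤ 2 * C := by linarith [hC t]
        calc Real.exp (-(a * t ^ 2 / 2)) * |h t - c|
            ≤ Real.exp (-(a * t ^ 2 / 2)) * (2 * C) :=
              mul_le_mul_of_nonneg_left this (Real.exp_pos _).le
          _ = 2 * C * G t := by rw [hG_def]; ring
      have h2 : G t ≤ Real.exp (-(a * x ^ 2 / 2)) * G (t - x) := by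
        rw [hG_def, ← Real.exp_add, Real.exp_le_exp]
        nlinarith [mul_nonneg (mul_nonneg ha.le (neg_nonneg.2 hx')) (sub_nonneg.2 htx)]
      calc |G t * (h t - c)| ≤ 2 * C * G t := h1
        _ ≤ 2 * C * (Real.exp (-(a * x ^ 2 / 2)) * G (t - x)) :=
            mul_le_mul_of_nonneg_left h2 (by positivity)
        _ = 2 * C * Real.exp (-(a * x ^ 2 / 2)) * G (t - x) := by ring
    have hI : |∫ t in Set.Ioi x, G t * (h t - c)| ≤
        2 * C * Real.exp (-(a * x ^ 2 / 2)) * (K / 2) := by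
      rw [hIeq]
      calc |∫ t in Set.Iic x, G t * (h t - c)|
          ≤ ∫ t in Set.Iic x, |G t * (h t - c)| := by
            simpa only [Real.norm_eq_abs] using
              norm_integral_le_integral_norm (μ := volume.restrict (Set.Iic x))
                (fun t => G t * (h t - c))
        _ ≤ ∫ t in Set.Iic x, 2 * C * Real.exp (-(a * x ^ 2 / 2)) * G (t - x) := by
            apply setIntegral_mono_on (hf_int.abs.integrableOn)
              (((hGint.comp_sub_right x).const_mul _).integrableOn)
              measurableSet_Iic hptw
        _ = 2 * C * Real.exp (-(a * x ^ 2 / 2)) * ∫ t in Set.Iic x, G (t - x) := by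
            rw [integral_const_mul]
        _ = 2 * C * Real.exp (-(a * x ^ 2 / 2)) * (K / 2) := by
            rw [shiftIic, hGhalfIic]
    rw [hE]
    calc Real.exp (a * x ^ 2 / 2) * |∫ t in Set.Ioi x, G t * (h t - c)|
        ≤ Real.exp (a * x ^ 2 / 2) * (2 * C * Real.exp (-(a * x ^ 2 / 2)) * (K / 2)) :=
          mul_le_mul_of_nonneg_left hI (Real.exp_pos _).le
      _ = (Real.exp (a * x ^ 2 / 2) * Real.exp (-(a * x ^ 2 / 2))) * (K * C) := by ring
      _ = K * C := by rw [hEinv]; ring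

end
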